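/- Gauss's summation theorem: if Re(c − a − b) > 0 and c is not a non-positive integer, then ∑_{m=0}^{∞} (a)_m (b)_m / ((c)_m m!) = Γ(c)Γ(c−a−b) / (Γ(c−a)Γ(c−b)). -/

import Mathlib

/-- Pochhammer symbol (κ)_m for a complex number κ. -/
noncomputable def pochC (x : ℂ) (m : ℕ) : ℂ := (ascPochhammer ℂ m).eval x

open Filter Topology Finset

lemma pochC_zero (x : ℂ) : pochC x 0 = 1 := by simp [pochC]

lemma pochC_succ (x : ℂ) (m : ℕ) : pochC x (m+1) = pochC x m * (x + m) := by
  simp [pochC, ascPochhammer_succ_eval]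

lemma pochC_eq_prod (x : ℂ) (m : ℕ) : pochC x m = ∏ j ∈ range m, (x + j) := by
  induction m with
  | zero => simp [pochC_zero]
  | succ n ih => rw [pochC_succ, ih, prod_range_succ]

lemma pochC_ne_zero {x : ℂ} (hx : ∀ k : ℕ, x + k ≠ 0) (m : ℕ) : pochC x m ≠ 0 := by
  induction m with
  | zero => simp [pochC_zero]
  | succ n ih => rw [pochC_succ]; exact mul_ne_zero ih (hx n)

lemma pochC_shift (c : ℂ) (m : ℕ) : c * pochC (c+1) m = pochC c (m+1) := by
  induction m with
  | zero => simp [pochC_zero, pochC_succ]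
  | succ n ih =>
      rw [pochC_succ, ← mul_assoc, ih, pochC_succ c (n+1)]
      push_cast; ring

-- Bernoulli-based comparison: if u(m+1) ≤ (1-s/m) u m eventually with s>1, then
-- u is summable and m * u m → 0.
lemma summable_and_decay {u : ℕ → ℝ} (hu : ∀ m, 0 ≤ u m) {s : ℝ} (hs : 1 < s)
    (h : ∀ᶠ m : ℕ in atTop, u (m+1) ≤ (1 - s/(m:ℝ)) * u m) :
    Summable u ∧ Tendsto (fun m : ℕ => (m:ℝ) * u m) atTop (𝓝 0) := by
  obtain ⟨M, hM⟩ := h.exists_forall_of_atTop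
  set M' := max M 1 with hM'
  have hM1 : (1:ℕ) ≤ M' := le_max_right _ _
  set C : ℝ := u M' * (M':ℝ) ^ s with hC
  have key : ∀ m, M' ≤ m → u m ≤ C * (m:ℝ) ^ (-s) := by
    intro m hm
    induction m, hm using Nat.le_induction with
    | base =>
        have hMpos : (0:ℝ) < (M':ℝ) := by exact_mod_cast hM1
        rw [hC, mul_assoc, ← Real.rpow_add hMpos]
        simp
    | succ m hm ih =>
        have hmpos : (0:ℝ) < (m:ℝ) := by
          have : (1:ℕ) ≤ m := le_trans hM1 hm
          exact_mod_cast this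
        have h1 : u (m+1) ≤ (1 - s/m) * u m := hM m (le_trans (le_max_left _ _) hm)
        have h2 : (1 - s/(m:ℝ)) ≤ (1 - 1/((m:ℝ)+1)) ^ s := by
          have hb : 1 + s * (-(1/((m:ℝ)+1))) ≤ (1 + (-(1/((m:ℝ)+1)))) ^ s := by
            apply one_add_mul_self_le_rpow_one_add _ hs.le
            have : (1:ℝ)/((m:ℝ)+1) ≤ 1 := by
              rw [div_le_one (by positivity)]; linarith
            linarith
        -- 1 - s/(m+1) ≥ 1 - s/m is wrong direction; we need 1-s/m ≤ 1-s/(m+1)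
          have h3 : s/((m:ℝ)+1) ≤ s/(m:ℝ) := by
            apply div_le_div_of_nonneg_left (by linarith) hmpos (by linarith)
          calc 1 - s/(m:ℝ) ≤ 1 - s/((m:ℝ)+1) := by linarith
            _ ≤ (1 - 1/((m:ℝ)+1)) ^ s := by
                have h1s : (1:ℝ) + s * (-(1/((m:ℝ)+1))) = 1 - s/((m:ℝ)+1) := by ring
                have h2s : (1:ℝ) + (-(1/((m:ℝ)+1))) = 1 - 1/((m:ℝ)+1) := by ring
                rw [h1s, h2s] at hb
                exact hb
        have h4 : (1 - 1/((m:ℝ)+1)) = (m:ℝ)/((m:ℝ)+1) := by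
          field_simp
          ring
        have h5 : u (m+1) ≤ ((m:ℝ)/((m:ℝ)+1)) ^ s * u m := by
          calc u (m+1) ≤ (1 - s/m) * u m := h1
            _ ≤ ((m:ℝ)/((m:ℝ)+1)) ^ s * u m := by
                apply mul_le_mul_of_nonneg_right _ (hu m)
                rw [← h4]; exact h2
        have h6 : ((m:ℝ)/((m:ℝ)+1)) ^ s * (C * (m:ℝ)^(-s)) = C * ((m:ℝ)+1)^(-s) := by
          rw [Real.div_rpow hmpos.le (by positivity)]
          rw [Real.rpow_neg hmpos.le, Real.rpow_neg (by positivity : (0:ℝ) ≤ (m:ℝ)+1)]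
          field_simp
        calc u (m+1) ≤ ((m:ℝ)/((m:ℝ)+1)) ^ s * u m := h5
          _ ≤ ((m:ℝ)/((m:ℝ)+1)) ^ s * (C * (m:ℝ)^(-s)) := by
              apply mul_le_mul_of_nonneg_left ih (by positivity)
          _ = C * ((m:ℝ)+1)^(-s) := h6
          _ = C * ((m+1:ℕ):ℝ)^(-s) := by push_cast; ring_nf
  have hCsum : Summable (fun m : ℕ => C * (m:ℝ)^(-s)) :=
    (Real.summable_nat_rpow.mpr (by linarith)).mul_left C
  constructor
  · apply Summable.of_norm_bounded_eventually_nat hCsum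
    filter_upwards [eventually_ge_atTop M'] with m hm
    rw [Real.norm_eq_abs, abs_of_nonneg (hu m)]
    exact key m hm
  · have hup : Tendsto (fun m : ℕ => C * (m:ℝ)^(1-s)) atTop (𝓝 0) := by
      rw [show (0:ℝ) = C * 0 by ring]
      exact (((tendsto_rpow_neg_atTop (by linarith : (0:ℝ) < s - 1)).comp
        tendsto_natCast_atTop_atTop).congr (by intro n; simp [neg_sub])).const_mul C
    apply squeeze_zero' (g := fun m : ℕ => C * (m:ℝ)^(1-s)) _ _ hup
    · filter_upwards with m using mul_nonneg (Nat.cast_nonneg m) (hu m)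
    · filter_upwards [eventually_ge_atTop M', eventually_ge_atTop 1] with m hm hm1
      have hmpos : (0:ℝ) < (m:ℝ) := by exact_mod_cast hm1
      calc (m:ℝ) * u m ≤ (m:ℝ) * (C * (m:ℝ)^(-s)) := by
            apply mul_le_mul_of_nonneg_left (key m hm) hmpos.le
        _ = C * (m:ℝ)^(1-s) := by
            rw [Real.rpow_sub hmpos, Real.rpow_one, Real.rpow_neg hmpos.le]
            field_simp

-- eventual real inequality: (m+A)(m+B) ≤ (1-s/m)(m+C)(m+1) when A+B+s < C+1
lemma ev_poly {A B C s : ℝ} (h : A + B + s < C + 1) (hs : 0 < s) :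
    ∀ᶠ m : ℕ in atTop, (m + A) * (m + B) ≤ (1 - s/(m:ℝ)) * ((m + C) * (m + 1)) := by
  set α : ℝ := C + 1 - s - A - B with hα
  have hαpos : 0 < α := by rw [hα]; linarith
  set β : ℝ := C - s*(C+1) - A*B with hβ
  set γ : ℝ := -(s*C) with hγ
  filter_upwards [(tendsto_natCast_atTop_atTop (R := ℝ)).eventually_ge_atTop
    ((1 + |β| + |γ|)/α), eventually_ge_atTop 1] with m hx hm1
  have hx1 : (1:ℝ) ≤ (m:ℝ) := by exact_mod_cast hm1
  have hxpos : (0:ℝ) < (m:ℝ) := by linarith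
  have hD : 0 ≤ α*(m:ℝ)^2 + β*(m:ℝ) + γ := by
    have h1 : (1 + |β| + |γ|) * (m:ℝ) ≤ α * (m:ℝ)^2 := by
      have := (div_le_iff₀ hαpos).mp hx
      nlinarith
    have h2 : -|β| * (m:ℝ) ≤ β * (m:ℝ) := by nlinarith [neg_abs_le β]
    have h3 : -|γ| * (m:ℝ) ≤ γ := by nlinarith [neg_abs_le γ, abs_nonneg γ]
    nlinarith
  have key : (1 - s/(m:ℝ)) * (((m:ℝ) + C) * ((m:ℝ) + 1)) - ((m:ℝ) + A) * ((m:ℝ) + B)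
      = (α*(m:ℝ)^2 + β*(m:ℝ) + γ) / (m:ℝ) := by
    field_simp
    ring
  linarith [key ▸ (div_nonneg hD hxpos.le)]

noncomputable def gaussTerm (a b c : ℂ) (m : ℕ) : ℂ :=
  pochC a m * pochC b m / (pochC c m * (Nat.factorial m : ℂ))

lemma gaussTerm_zero (a b c : ℂ) : gaussTerm a b c 0 = 1 := by
  simp [gaussTerm, pochC_zero]

lemma gaussTerm_succ (a b c : ℂ) {m : ℕ} (hcm : c + m ≠ 0) :
    gaussTerm a b c (m+1) = gaussTerm a b c m * ((a+m)*(b+m) / ((c+m)*(m+1))) := by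
  unfold gaussTerm
  rw [pochC_succ, pochC_succ, pochC_succ, Nat.factorial_succ]
  have hfac : ((m.factorial : ℂ)) ≠ 0 := by exact_mod_cast m.factorial_ne_zero
  have hm1 : ((m:ℂ)+1) ≠ 0 := by
    have : ((m+1 : ℕ) : ℂ) ≠ 0 := Nat.cast_ne_zero.mpr (Nat.succ_ne_zero m)
    push_cast at this; exact this
  push_cast
  by_cases hp : pochC c m = 0
  · simp [hp]
  · field_simp

-- norm of the ratio is eventually ≤ 1 - s/m
lemma gaussTerm_ratio_norm (a b c : ℂ) {s : ℝ} (hs1 : 1 < s) (hs2 : s < (c-a-b).re + 1) :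
    ∀ᶠ m : ℕ in atTop, ‖(a+m)*(b+m)‖ ≤ (1 - s/(m:ℝ)) * ‖(c+m)*((m:ℂ)+1)‖ := by
  set ε : ℝ := ((c-a-b).re + 1 - s)/4 with hε
  have hεpos : 0 < ε := by rw [hε]; linarith
  have habs : ∀ z : ℂ, ∀ᶠ m : ℕ in atTop, ‖z + m‖ ≤ (m:ℝ) + z.re + ε := by
    intro z
    filter_upwards [(tendsto_natCast_atTop_atTop (R := ℝ)).eventually_ge_atTop
      ((z.im^2 - ε^2)/(2*ε) - z.re), (tendsto_natCast_atTop_atTop (R := ℝ)).eventually_ge_atTop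
      (-z.re)] with m hm hm'
    have hr : (0:ℝ) ≤ (m:ℝ) + z.re + ε := by linarith
    have hsq : ‖z + (m:ℂ)‖^2 ≤ ((m:ℝ) + z.re + ε)^2 := by
      rw [Complex.sq_norm, Complex.normSq_apply]
      simp only [Complex.add_re, Complex.add_im, Complex.natCast_re, Complex.natCast_im]
      have : z.im ^ 2 ≤ 2*ε*((m:ℝ) + z.re) + ε^2 := by
        have := (div_le_iff₀ (by linarith : (0:ℝ) < 2*ε)).mp (by linarith : (z.im^2 - ε^2)/(2*ε) ≤ (m:ℝ) + z.re)
        nlinarith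
      nlinarith
    have := abs_le_abs (a := ‖z + (m:ℂ)‖) (b := (m:ℝ) + z.re + ε)
    nlinarith [norm_nonneg (z + (m:ℂ))]
  have hCre : ∀ m : ℕ, (m:ℝ) + c.re ≤ ‖c + m‖ := by
    intro m
    have := Complex.re_le_norm (c + m)
    simpa [Complex.add_re, add_comm] using this
  have hpoly := ev_poly (A := a.re + ε) (B := b.re + ε) (C := c.re) (s := s)
    (by simp only [Complex.sub_re] at hs2 hε; linarith) (by linarith)
  filter_upwards [habs a, habs b, hpoly,
    (tendsto_natCast_atTop_atTop (R := ℝ)).eventually_ge_atTop (max s (max (-(a.re + ε)) (-(b.re + ε)))),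
    (tendsto_natCast_atTop_atTop (R := ℝ)).eventually_ge_atTop (-c.re)] with m ha hb hp hm hm'
  have hsm : 0 ≤ 1 - s/(m:ℝ) := by
    have hs0 : (0:ℝ) < (m:ℝ) := lt_of_lt_of_le (by linarith [le_max_left s (max (-(a.re + ε)) (-(b.re + ε)))] : (0:ℝ) < s) (le_trans (le_max_left _ _) hm)
    have : s ≤ (m:ℝ) := le_trans (le_max_left _ _) hm
    have := div_le_one_of_le₀ this hs0.le
    linarith
  have hA0 : (0:ℝ) ≤ (m:ℝ) + (a.re + ε) := by
    have := le_trans (le_trans (le_max_left _ _) (le_max_right s _)) hm; linarith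
  have hB0 : (0:ℝ) ≤ (m:ℝ) + (b.re + ε) := by
    have := le_trans (le_trans (le_max_right _ _) (le_max_right s _)) hm; linarith
  have hC0 : (0:ℝ) ≤ (m:ℝ) + c.re := by linarith
  calc ‖(a+m)*(b+m)‖ = ‖a+(m:ℂ)‖ * ‖b+(m:ℂ)‖ := norm_mul _ _
    _ ≤ ((m:ℝ) + (a.re + ε)) * ((m:ℝ) + (b.re + ε)) := by
        apply mul_le_mul (by linarith [ha]) (by linarith [hb]) (norm_nonneg _) hA0
    _ ≤ (1 - s/(m:ℝ)) * (((m:ℝ) + c.re) * ((m:ℝ) + 1)) := by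
        have := hp; push_cast at this ⊢; linarith
    _ ≤ (1 - s/(m:ℝ)) * (‖c+(m:ℂ)‖ * ((m:ℝ) + 1)) := by
        apply mul_le_mul_of_nonneg_left _ hsm
        apply mul_le_mul_of_nonneg_right (hCre m) (by positivity)
    _ = (1 - s/(m:ℝ)) * ‖(c+m)*((m:ℂ)+1)‖ := by
        rw [norm_mul]
        congr 2
        rw [show ((m:ℂ)+1) = ((m+1 : ℕ) : ℂ) by push_cast; ring, Complex.norm_natCast]
        push_cast; ring

lemma hc_shift {c : ℂ} (hc : ∀ k : ℕ, c + k ≠ 0) (n : ℕ) : ∀ k : ℕ, (c + n) + k ≠ 0 := by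
  intro k
  have := hc (n + k)
  push_cast at this ⊢
  intro hcontra; apply this; rw [← hcontra]; ring

lemma summable_gaussTerm (a b c : ℂ) (hc : ∀ k : ℕ, c + k ≠ 0) (h : 0 < (c-a-b).re) :
    Summable (gaussTerm a b c) ∧
      Tendsto (fun m : ℕ => (m:ℝ) * ‖gaussTerm a b c m‖) atTop (𝓝 0) := by
  set s : ℝ := 1 + (c-a-b).re/2 with hs
  have hs1 : 1 < s := by rw [hs]; linarith
  have hs2 : s < (c-a-b).re + 1 := by rw [hs]; linarith
  have hrat : ∀ᶠ m : ℕ in atTop,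
      ‖gaussTerm a b c (m+1)‖ ≤ (1 - s/(m:ℝ)) * ‖gaussTerm a b c m‖ := by
    filter_upwards [gaussTerm_ratio_norm a b c hs1 hs2,
      (tendsto_natCast_atTop_atTop (R := ℝ)).eventually_ge_atTop s] with m hm hms
    rw [gaussTerm_succ a b c (hc m), norm_mul, norm_div]
    have hden : (0:ℝ) < ‖(c+(m:ℂ))*((m:ℂ)+1)‖ := by
      rw [norm_pos_iff]
      apply mul_ne_zero (hc m)
      intro hcon
      have : ((m:ℝ)+1) = 0 := by
        have := congrArg Complex.re hcon; simpa using this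
      have : (0:ℝ) ≤ (m:ℝ) := Nat.cast_nonneg m
      linarith
    calc ‖gaussTerm a b c m‖ * (‖(a+m)*(b+m)‖ / ‖(c+m)*((m:ℂ)+1)‖)
        ≤ ‖gaussTerm a b c m‖ * (1 - s/(m:ℝ)) := by
          apply mul_le_mul_of_nonneg_left _ (norm_nonneg _)
          rw [div_le_iff₀ hden]
          calc ‖(a+(m:ℂ))*(b+(m:ℂ))‖ ≤ (1 - s/(m:ℝ)) * ‖(c+(m:ℂ))*((m:ℂ)+1)‖ := hm
            _ = (1 - s/(m:ℝ)) * ‖(c+(m:ℂ))*((m:ℂ)+1)‖ := rfl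
      _ = (1 - s/(m:ℝ)) * ‖gaussTerm a b c m‖ := by ring
  have := summable_and_decay (fun m => norm_nonneg (gaussTerm a b c m)) hs1 hrat
  exact ⟨this.1.of_norm, this.2⟩

lemma gaussTerm_shift_c (a b c : ℂ) (hc : ∀ k : ℕ, c + k ≠ 0) (m : ℕ) :
    (c + m) * gaussTerm a b (c+1) m = c * gaussTerm a b c m := by
  unfold gaussTerm
  have h1 : pochC c m * (c + m) = pochC c (m+1) := (pochC_succ c m).symm
  have h2 : c * pochC (c+1) m = pochC c (m+1) := pochC_shift c m
  have hp1 : pochC (c+1) m ≠ 0 := by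
    have := pochC_ne_zero (hc_shift hc 1) m
    push_cast at this; exact this
  have hp0 : pochC c m ≠ 0 := pochC_ne_zero hc m
  have hfac : ((m.factorial : ℂ)) ≠ 0 := by exact_mod_cast m.factorial_ne_zero
  field_simp
  calc (c + ↑m) * pochC a m * pochC b m * pochC c m
      = (pochC c m * (c + m)) * (pochC a m * pochC b m) := by ring
    _ = (c * pochC (c+1) m) * (pochC a m * pochC b m) := by rw [h1, h2]
    _ = c * pochC a m * pochC b m * pochC (c+1) m := by ring

-- the pointwise identity for telescoping
lemma gauss_pointwise (a b c : ℂ) (hc : ∀ k : ℕ, c + k ≠ 0) (m : ℕ) :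
    c*(c-a-b) * gaussTerm a b c m - (c-a)*(c-b) * gaussTerm a b (c+1) m
      = c * ((m:ℂ) * gaussTerm a b c m - ((m:ℂ)+1) * gaussTerm a b c (m+1)) := by
  have hcm : c + (m:ℂ) ≠ 0 := hc m
  have hm1 : ((m:ℂ)+1) ≠ 0 := by
    intro hcon
    have := congrArg Complex.re hcon
    simp at this
    have : (0:ℝ) ≤ (m:ℝ) := Nat.cast_nonneg m
    linarith
  have h1 : gaussTerm a b c (m+1) = gaussTerm a b c m * ((a+m)*(b+m) / ((c+m)*(m+1))) :=
    gaussTerm_succ a b c hcm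
  have h2 : gaussTerm a b (c+1) m = c * gaussTerm a b c m / (c + m) := by
    rw [← gaussTerm_shift_c a b c hc m]; field_simp
  rw [h1, h2]
  field_simp
  ring

-- contiguous relation in c
lemma gauss_step (a b c : ℂ) (hc : ∀ k : ℕ, c + k ≠ 0) (h : 0 < (c-a-b).re) :
    c*(c-a-b) * ∑' m, gaussTerm a b c m = (c-a)*(c-b) * ∑' m, gaussTerm a b (c+1) m := by
  have hc1 : ∀ k : ℕ, (c+1) + k ≠ 0 := by
    have := hc_shift hc 1; push_cast at this; exact this
  have h1 : 0 < ((c+1)-a-b).re := by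
    rw [show (c+1)-a-b = (c-a-b)+1 by ring]
    simp only [Complex.add_re, Complex.one_re]
    linarith
  obtain ⟨hS, hdecay⟩ := summable_gaussTerm a b c hc h
  obtain ⟨hS1, _⟩ := summable_gaussTerm a b (c+1) hc1 h1
  set f : ℕ → ℂ := fun m => (m:ℂ) * gaussTerm a b c m with hf
  -- the combination has sum X := c(c-a-b)T - (c-a)(c-b)T1
  have hcomb : HasSum (fun m => c*(c-a-b) * gaussTerm a b c m
      - (c-a)*(c-b) * gaussTerm a b (c+1) m)
      (c*(c-a-b) * ∑' m, gaussTerm a b c m - (c-a)*(c-b) * ∑' m, gaussTerm a b (c+1) m) :=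
    (hS.hasSum.mul_left _).sub (hS1.hasSum.mul_left _)
  have hcomb' : HasSum (fun m => c * (f m - f (m+1)))
      (c*(c-a-b) * ∑' m, gaussTerm a b c m - (c-a)*(c-b) * ∑' m, gaussTerm a b (c+1) m) := by
    apply hcomb.congr_fun
    intro m
    simp only [hf]
    push_cast
    exact (gauss_pointwise a b c hc m).symm
  have hc0 : c ≠ 0 := by have := hc 0; simpa using this
  have htel : HasSum (fun m => f m - f (m+1))
      ((c*(c-a-b) * ∑' m, gaussTerm a b c m - (c-a)*(c-b) * ∑' m, gaussTerm a b (c+1) m)/c) := by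
    have := hcomb'.div_const c
    apply this.congr_fun
    intro m
    field_simp
  -- partial sums of the telescoping series tend to f 0 - lim f n = 0
  have hfl : Tendsto f atTop (𝓝 0) := by
    rw [tendsto_zero_iff_norm_tendsto_zero]
    apply squeeze_zero (fun m => norm_nonneg _) _ hdecay
    intro m
    rw [hf, norm_mul, Complex.norm_natCast]
  have hpartial : Tendsto (fun n => ∑ m ∈ Finset.range n, (f m - f (m+1))) atTop (𝓝 0) := by
    have : (fun n => ∑ m ∈ Finset.range n, (f m - f (m+1))) = fun n => f 0 - f n := by
      funext n; exact Finset.sum_range_sub' f n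
    rw [this]
    have hf0 : f 0 = 0 := by simp [hf]
    rw [hf0]
    simpa using ((tendsto_const_nhds : Tendsto (fun _ : ℕ => (0:ℂ)) atTop (𝓝 0)).sub hfl)
  have := tendsto_nhds_unique (htel.tendsto_sum_nat) hpartial
  have heq : (c*(c-a-b) * ∑' m, gaussTerm a b c m
      - (c-a)*(c-b) * ∑' m, gaussTerm a b (c+1) m) = 0 := by
    rwa [div_eq_zero_iff, or_iff_left hc0] at this
  linear_combination heq

lemma gauss_iter (a b c : ℂ) (hc : ∀ k : ℕ, c + k ≠ 0) (h : 0 < (c-a-b).re) (n : ℕ) :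
    pochC c n * pochC (c-a-b) n * ∑' m, gaussTerm a b c m
      = pochC (c-a) n * pochC (c-b) n * ∑' m, gaussTerm a b (c + n) m := by
  induction n with
  | zero => simp [pochC_zero]
  | succ n ih =>
      have hcn : ∀ k : ℕ, (c + n) + k ≠ 0 := hc_shift hc n
      have hn : 0 < ((c+n)-a-b).re := by
        rw [show (c+(n:ℂ))-a-b = (c-a-b)+(n:ℂ) by ring]
        simp only [Complex.add_re, Complex.natCast_re]
        have : (0:ℝ) ≤ (n:ℝ) := Nat.cast_nonneg n
        linarith
      have step := gauss_step a b (c + n) hcn hn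
      rw [pochC_succ, pochC_succ, pochC_succ, pochC_succ]
      have e1 : (c + (n:ℂ)) * ((c+(n:ℂ))-a-b) * ∑' m, gaussTerm a b (c+n) m
          = ((c+(n:ℂ))-a) * ((c+(n:ℂ))-b) * ∑' m, gaussTerm a b (c+(n:ℂ)+1) m := step
      have e2 : (c + ((n:ℂ)+1)) = c + ((n+1 : ℕ) : ℂ) := by push_cast; ring
      calc pochC c n * (c + n) * (pochC (c-a-b) n * (c-a-b+n)) * ∑' m, gaussTerm a b c m
          = (c+(n:ℂ)) * ((c+(n:ℂ))-a-b) * (pochC c n * pochC (c-a-b) n * ∑' m, gaussTerm a b c m) := by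
            ring_nf
        _ = (c+(n:ℂ)) * ((c+(n:ℂ))-a-b) * (pochC (c-a) n * pochC (c-b) n * ∑' m, gaussTerm a b (c+n) m) := by
            rw [ih]
        _ = pochC (c-a) n * pochC (c-b) n * ((c+(n:ℂ)) * ((c+(n:ℂ))-a-b) * ∑' m, gaussTerm a b (c+n) m) := by
            ring
        _ = pochC (c-a) n * pochC (c-b) n * (((c+(n:ℂ))-a) * ((c+(n:ℂ))-b) * ∑' m, gaussTerm a b (c+(n:ℂ)+1) m) := by
            rw [e1]
        _ = pochC (c-a) n * (c-a+n) * (pochC (c-b) n * (c-b+n)) * ∑' m, gaussTerm a b (c + ((n+1:ℕ):ℂ)) m := by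
            rw [← e2]
            ring_nf

noncomputable def domSeq (A B R : ℝ) : ℕ → ℝ
  | 0 => 1
  | (m+1) => domSeq A B R m * ((A+m)*(B+m)/((R+m)*(m+1)))

lemma domSeq_nonneg {A B R : ℝ} (hA : 0 ≤ A) (hB : 0 ≤ B) (hR : 0 < R) (m : ℕ) :
    0 ≤ domSeq A B R m := by
  induction m with
  | zero => norm_num [domSeq]
  | succ m ih =>
      rw [domSeq]
      apply mul_nonneg ih
      apply div_nonneg (by positivity) (by positivity)

lemma domSeq_summable {A B R : ℝ} (hA : 0 ≤ A) (hB : 0 ≤ B) (hR : A + B + 1 < R) :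
    Summable (domSeq A B R) := by
  have hR0 : 0 < R := by linarith
  refine (summable_and_decay (domSeq_nonneg hA hB hR0) (by norm_num : (1:ℝ) < 2) ?_).1
  filter_upwards [ev_poly (A := A) (B := B) (C := R) (s := 2) (by linarith) (by norm_num),
    eventually_ge_atTop 1] with m hm hm1
  have hm1' : (1:ℝ) ≤ (m:ℝ) := by exact_mod_cast hm1
  have hden : (0:ℝ) < ((m:ℝ)+R)*((m:ℝ)+1) := by positivity
  rw [domSeq]
  have hrat : (A+(m:ℝ))*(B+(m:ℝ))/((R+(m:ℝ))*((m:ℝ)+1)) ≤ (1 - 2/(m:ℝ)) := by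
    rw [div_le_iff₀ (by positivity)]
    calc (A+(m:ℝ))*(B+(m:ℝ)) = ((m:ℝ)+A)*((m:ℝ)+B) := by ring
      _ ≤ (1 - 2/(m:ℝ)) * (((m:ℝ)+R)*((m:ℝ)+1)) := hm
      _ = (1 - 2/(m:ℝ)) * ((R+(m:ℝ))*((m:ℝ)+1)) := by ring
  calc domSeq A B R m * ((A+(m:ℝ))*(B+(m:ℝ))/((R+(m:ℝ))*((m:ℝ)+1)))
      ≤ domSeq A B R m * (1 - 2/(m:ℝ)) :=
        mul_le_mul_of_nonneg_left hrat (domSeq_nonneg hA hB hR0 m)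
    _ = (1 - 2/(m:ℝ)) * domSeq A B R m := by ring

lemma norm_pochC_ge {z : ℂ} {R : ℝ} (hz : R ≤ z.re) (hR : 1 ≤ R) (m : ℕ) :
    R ≤ ‖pochC z (m+1)‖ := by
  induction m with
  | zero =>
      rw [pochC_succ, pochC_zero, one_mul]
      calc R ≤ z.re := hz
        _ ≤ (z + (0:ℕ)).re := by simp
        _ ≤ ‖z + ((0:ℕ):ℂ)‖ := Complex.re_le_norm _
  | succ m ih =>
      rw [pochC_succ]
      have h2 : (1:ℝ) ≤ ‖z + ((m+1 : ℕ):ℂ)‖ := by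
        calc (1:ℝ) ≤ R := hR
          _ ≤ z.re + (m+1 : ℕ) := by
              have : (0:ℝ) ≤ ((m+1:ℕ):ℝ) := Nat.cast_nonneg _
              linarith
          _ = (z + ((m+1:ℕ):ℂ)).re := by simp
          _ ≤ ‖z + ((m+1:ℕ):ℂ)‖ := Complex.re_le_norm _
      rw [norm_mul]
      calc R = R * 1 := by ring
        _ ≤ ‖pochC z (m+1)‖ * ‖z + ((m+1:ℕ):ℂ)‖ :=
            mul_le_mul ih h2 (by norm_num) (norm_nonneg _)

lemma gaussTerm_norm_le_domSeq (a b : ℂ) {z : ℂ} {R : ℝ} (hz : ∀ k : ℕ, z + k ≠ 0)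
    (hzR : R ≤ z.re) (hR : 0 < R) (m : ℕ) :
    ‖gaussTerm a b z m‖ ≤ domSeq ‖a‖ ‖b‖ R m := by
  induction m with
  | zero => rw [gaussTerm_zero]; norm_num [domSeq]
  | succ m ih =>
      rw [gaussTerm_succ a b z (hz m), domSeq, norm_mul]
      apply mul_le_mul ih _ (norm_nonneg _) (domSeq_nonneg (norm_nonneg a) (norm_nonneg b) hR m)
      rw [norm_div, norm_mul, norm_mul]
      have hm1 : ‖(m:ℂ)+1‖ = (m:ℝ)+1 := by
        rw [show ((m:ℂ)+1) = ((m+1 : ℕ) : ℂ) by push_cast; ring, Complex.norm_natCast]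
        push_cast; ring
      have hzm : R + (m:ℝ) ≤ ‖z + (m:ℂ)‖ := by
        calc R + (m:ℝ) ≤ z.re + m := by linarith
          _ = (z + (m:ℂ)).re := by simp
          _ ≤ ‖z + (m:ℂ)‖ := Complex.re_le_norm _
      have hden : (0:ℝ) < (R+(m:ℝ))*((m:ℝ)+1) := by positivity
      apply div_le_div₀ (by positivity) _ hden _
      · apply mul_le_mul (by simpa using norm_add_le a (m:ℂ)) (by simpa using norm_add_le b (m:ℂ))
          (norm_nonneg _) (by positivity)
      · rw [hm1]
        apply mul_le_mul_of_nonneg_right hzm (by positivity)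

lemma tendsto_gauss_tail (a b c : ℂ) (hc : ∀ k : ℕ, c + k ≠ 0) :
    Tendsto (fun n : ℕ => ∑' m, gaussTerm a b (c + n) m) atTop (𝓝 1) := by
  set n₀ : ℕ := ⌈‖a‖ + ‖b‖ + 2 + |c.re|⌉₊ + 1 with hn₀
  set R : ℝ := c.re + n₀ with hRdef
  have hR1 : ‖a‖ + ‖b‖ + 1 < R := by
    have h1 : ‖a‖ + ‖b‖ + 2 + |c.re| ≤ (⌈‖a‖ + ‖b‖ + 2 + |c.re|⌉₊ : ℝ) :=
      Nat.le_ceil _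
    have h2 : -|c.re| ≤ c.re := neg_abs_le _
    have : ((n₀:ℕ):ℝ) = (⌈‖a‖ + ‖b‖ + 2 + |c.re|⌉₊ : ℝ) + 1 := by rw [hn₀]; push_cast; ring
    rw [hRdef, this]
    linarith
  have hR0 : 0 < R := by
    have := norm_nonneg a; have := norm_nonneg b; linarith
  have hR1' : (1:ℝ) ≤ R := by
    have := norm_nonneg a; have := norm_nonneg b; linarith
  have hbound : ∀ᶠ n : ℕ in atTop, ∀ m : ℕ, ‖gaussTerm a b (c + n) m‖ ≤ domSeq ‖a‖ ‖b‖ R m := by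
    filter_upwards [eventually_ge_atTop n₀] with n hn m
    apply gaussTerm_norm_le_domSeq a b (hc_shift hc n) _ hR0
    rw [hRdef]
    simp only [Complex.add_re, Complex.natCast_re]
    have : (n₀:ℝ) ≤ (n:ℝ) := by exact_mod_cast hn
    linarith
  have hpt : ∀ m : ℕ, Tendsto (fun n : ℕ => gaussTerm a b (c + n) m) atTop
      (𝓝 (if m = 0 then 1 else 0)) := by
    intro m
    match m with
    | 0 => simp only [if_pos rfl, gaussTerm_zero]; exact tendsto_const_nhds
    | (m+1) =>
        rw [show (if m+1 = 0 then (1:ℂ) else 0) = 0 from if_neg (Nat.succ_ne_zero m)]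
        rw [tendsto_zero_iff_norm_tendsto_zero]
        have hup : Tendsto (fun n : ℕ => ‖pochC a (m+1)‖ * ‖pochC b (m+1)‖ / (c.re + n))
            atTop (𝓝 0) :=
          Tendsto.div_atTop tendsto_const_nhds
            (tendsto_atTop_add_const_left _ _ tendsto_natCast_atTop_atTop)
        apply squeeze_zero' (Eventually.of_forall fun n => norm_nonneg _) _ hup
        filter_upwards [(tendsto_natCast_atTop_atTop (R := ℝ)).eventually_ge_atTop (1 - c.re)]
          with n hn
        have hcre : (1:ℝ) ≤ c.re + n := by linarith
        have hpge : c.re + (n:ℝ) ≤ ‖pochC (c + n) (m+1)‖ := by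
          apply norm_pochC_ge _ hcre
          simp only [Complex.add_re, Complex.natCast_re]
          linarith
        unfold gaussTerm
        rw [norm_div, norm_mul, norm_mul]
        have hfac1 : (1:ℝ) ≤ ‖((m+1).factorial : ℂ)‖ := by
          rw [Complex.norm_natCast]
          exact_mod_cast Nat.one_le_iff_ne_zero.mpr (m+1).factorial_ne_zero
        apply div_le_div₀ (by positivity) le_rfl (by linarith : (0:ℝ) < c.re + (n:ℝ))
        calc c.re + (n:ℝ) = (c.re + n) * 1 := by ring
          _ ≤ ‖pochC (c + n) (m+1)‖ * ‖((m+1).factorial : ℂ)‖ := by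
              apply mul_le_mul hpge hfac1 (by norm_num) (norm_nonneg _)
  have hsum : Summable (domSeq ‖a‖ ‖b‖ R) :=
    domSeq_summable (norm_nonneg a) (norm_nonneg b) hR1
  have := tendsto_tsum_of_dominated_convergence hsum hpt hbound
  rwa [show (∑' k : ℕ, if k = 0 then (1:ℂ) else 0) = 1 from tsum_ite_eq 0 (fun _ => (1:ℂ))] at this

lemma tendsto_shift_ratio (z w : ℂ) : Tendsto (fun n : ℕ => (z + n)/(w + n)) atTop (𝓝 1) := by
  have hz : Tendsto (fun n : ℕ => z/(n:ℂ) + 1) atTop (𝓝 1) := by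
    have h0 : Tendsto (fun n : ℕ => z/(n:ℂ)) atTop (𝓝 0) := by
      rw [tendsto_zero_iff_norm_tendsto_zero]
      simp only [norm_div, Complex.norm_natCast]
      exact Tendsto.div_atTop tendsto_const_nhds tendsto_natCast_atTop_atTop
    simpa using h0.add (tendsto_const_nhds (x := (1:ℂ)))
  have hw : Tendsto (fun n : ℕ => w/(n:ℂ) + 1) atTop (𝓝 1) := by
    have h0 : Tendsto (fun n : ℕ => w/(n:ℂ)) atTop (𝓝 0) := by
      rw [tendsto_zero_iff_norm_tendsto_zero]
      simp only [norm_div, Complex.norm_natCast]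
      exact Tendsto.div_atTop tendsto_const_nhds tendsto_natCast_atTop_atTop
    simpa using h0.add (tendsto_const_nhds (x := (1:ℂ)))
  have := hz.div hw one_ne_zero
  rw [div_one] at this
  apply this.congr'
  filter_upwards [eventually_ge_atTop 1] with n hn
  simp only [Pi.div_apply]
  have hn0 : (n:ℂ) ≠ 0 := Nat.cast_ne_zero.mpr (by omega)
  by_cases hwn : w + n = 0
  · rw [hwn, div_zero]
    have : w/(n:ℂ) + 1 = 0 := by
      field_simp
      linear_combination hwn
    rw [this, div_zero]
  · have h1 : z/(n:ℂ) + 1 = (z + n)/n := by field_simp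
    have h2 : w/(n:ℂ) + 1 = (w + n)/n := by field_simp
    rw [h1, h2]
    field_simp

lemma GammaSeq_eq_pochC (z : ℂ) (n : ℕ) :
    Complex.GammaSeq z n = (n:ℂ)^z * n.factorial / (pochC z n * (z + n)) := by
  rw [Complex.GammaSeq, ← pochC_eq_prod, pochC_succ]

lemma aux_div (K D1 D2 : ℂ) (hK : K ≠ 0) : (K/D1)/(K/D2) = D2/D1 := by
  by_cases h1 : D1 = 0
  · simp [h1]
  by_cases h2 : D2 = 0
  · simp [h2]
  field_simp

lemma tendsto_Q (a b c : ℂ) (hc : ∀ k : ℕ, c + k ≠ 0) (h : 0 < (c-a-b).re)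
    (hA : ∀ k : ℕ, c - a + k ≠ 0) (hB : ∀ k : ℕ, c - b + k ≠ 0) :
    Tendsto (fun n : ℕ => pochC (c-a) n * pochC (c-b) n / (pochC c n * pochC (c-a-b) n))
      atTop (𝓝 (Complex.Gamma c * Complex.Gamma (c-a-b) /
        (Complex.Gamma (c-a) * Complex.Gamma (c-b)))) := by
  have hσ : ∀ k : ℕ, (c-a-b) + k ≠ 0 := by
    intro k hcon
    have := congrArg Complex.re hcon
    simp only [Complex.add_re, Complex.natCast_re, Complex.zero_re] at this
    have hk : (0:ℝ) ≤ (k:ℝ) := Nat.cast_nonneg k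
    linarith
  have hGa : Complex.Gamma (c-a) ≠ 0 := by
    apply Complex.Gamma_ne_zero
    intro m hcon
    exact hA m (by rw [hcon]; ring)
  have hGb : Complex.Gamma (c-b) ≠ 0 := by
    apply Complex.Gamma_ne_zero
    intro m hcon
    exact hB m (by rw [hcon]; ring)
  have hmain : Tendsto (fun n : ℕ =>
      (Complex.GammaSeq c n * Complex.GammaSeq (c-a-b) n /
        (Complex.GammaSeq (c-a) n * Complex.GammaSeq (c-b) n)) *
      ((c + n)*((c-a-b) + n)/(((c-a) + n)*((c-b) + n)))) atTop
      (𝓝 (Complex.Gamma c * Complex.Gamma (c-a-b) /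
        (Complex.Gamma (c-a) * Complex.Gamma (c-b)) * 1)) := by
    apply Tendsto.mul
    · exact ((Complex.GammaSeq_tendsto_Gamma c).mul
        (Complex.GammaSeq_tendsto_Gamma (c-a-b))).div
        ((Complex.GammaSeq_tendsto_Gamma (c-a)).mul
          (Complex.GammaSeq_tendsto_Gamma (c-b))) (mul_ne_zero hGa hGb)
    · have := (tendsto_shift_ratio c (c-a)).mul (tendsto_shift_ratio (c-a-b) (c-b))
      rw [mul_one] at this
      apply this.congr
      intro n
      rw [div_mul_div_comm]
  rw [mul_one] at hmain
  apply hmain.congr'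
  filter_upwards [eventually_ge_atTop 1] with n hn
  have hn0 : (n:ℂ) ≠ 0 := Nat.cast_ne_zero.mpr (by omega)
  have hfac : ((n.factorial : ℂ)) ≠ 0 := by exact_mod_cast n.factorial_ne_zero
  have hX2 : (n:ℂ)^(c-a) ≠ 0 := by
    rw [Ne, Complex.cpow_eq_zero_iff]; tauto
  have hX3 : (n:ℂ)^(c-b) ≠ 0 := by
    rw [Ne, Complex.cpow_eq_zero_iff]; tauto
  have hXY : (n:ℂ)^c * (n:ℂ)^(c-a-b) = (n:ℂ)^(c-a) * (n:ℂ)^(c-b) := by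
    rw [← Complex.cpow_add _ _ hn0, ← Complex.cpow_add _ _ hn0]
    congr 1; ring
  have hGmul1 : Complex.GammaSeq c n * Complex.GammaSeq (c-a-b) n
      = ((n:ℂ)^(c-a) * (n:ℂ)^(c-b) * ((n.factorial:ℂ) * n.factorial))
        / ((pochC c n * (c+n)) * (pochC (c-a-b) n * ((c-a-b)+n))) := by
    rw [GammaSeq_eq_pochC, GammaSeq_eq_pochC, div_mul_div_comm, ← hXY]
    congr 1; ring
  have hGmul2 : Complex.GammaSeq (c-a) n * Complex.GammaSeq (c-b) n
      = ((n:ℂ)^(c-a) * (n:ℂ)^(c-b) * ((n.factorial:ℂ) * n.factorial))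
        / ((pochC (c-a) n * ((c-a)+n)) * (pochC (c-b) n * ((c-b)+n))) := by
    rw [GammaSeq_eq_pochC, GammaSeq_eq_pochC, div_mul_div_comm]
    congr 1; ring
  have hK : (n:ℂ)^(c-a) * (n:ℂ)^(c-b) * ((n.factorial:ℂ) * n.factorial) ≠ 0 :=
    mul_ne_zero (mul_ne_zero hX2 hX3) (mul_ne_zero hfac hfac)
  rw [hGmul1, hGmul2, aux_div _ _ _ hK]
  have hpc : pochC c n ≠ 0 := pochC_ne_zero hc n
  have hpσ : pochC (c-a-b) n ≠ 0 := pochC_ne_zero hσ n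
  have hpA : pochC (c-a) n ≠ 0 := pochC_ne_zero hA n
  have hpB : pochC (c-b) n ≠ 0 := pochC_ne_zero hB n
  have hcn : c + (n:ℂ) ≠ 0 := hc n
  have hσn : (c-a-b) + (n:ℂ) ≠ 0 := hσ n
  have hAn : (c-a) + (n:ℂ) ≠ 0 := hA n
  have hBn : (c-b) + (n:ℂ) ≠ 0 := hB n
  field_simp

/-- Gauss's summation theorem: if Re(c−a−b) > 0 and c is not a non-positive
integer, then ∑_{m≥0} (a)_m(b)_m/((c)_m m!) = Γ(c)Γ(c−a−b)/(Γ(c−a)Γ(c−b)). -/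
theorem gauss_summation (a b c : ℂ)
    (hc : ∀ k : ℕ, c ≠ -(k : ℂ))
    (h : 0 < (c - a - b).re) :
    ∑' m : ℕ, pochC a m * pochC b m / (pochC c m * (Nat.factorial m : ℂ))
      = Complex.Gamma c * Complex.Gamma (c - a - b) /
        (Complex.Gamma (c - a) * Complex.Gamma (c - b)) := by
  have hc' : ∀ k : ℕ, c + k ≠ 0 := by
    intro k hcon
    exact hc k (by linear_combination hcon)
  have hσ : ∀ k : ℕ, (c-a-b) + k ≠ 0 := by
    intro k hcon
    have := congrArg Complex.re hcon
    simp only [Complex.add_re, Complex.natCast_re, Complex.zero_re] at this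
    have hk : (0:ℝ) ≤ (k:ℝ) := Nat.cast_nonneg k
    linarith
  have hT : ∑' m : ℕ, pochC a m * pochC b m / (pochC c m * (Nat.factorial m : ℂ))
      = ∑' m, gaussTerm a b c m := rfl
  rw [hT]
  by_cases hA : ∀ k : ℕ, c - a + k ≠ 0
  · by_cases hB : ∀ k : ℕ, c - b + k ≠ 0
    · -- generic case
      have hconst : ∀ n : ℕ,
          (pochC (c-a) n * pochC (c-b) n / (pochC c n * pochC (c-a-b) n))
            * ∑' m, gaussTerm a b (c + n) m = ∑' m, gaussTerm a b c m := by
        intro n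
        have hiter := gauss_iter a b c hc' h n
        have hne : pochC c n * pochC (c-a-b) n ≠ 0 :=
          mul_ne_zero (pochC_ne_zero hc' n) (pochC_ne_zero hσ n)
        rw [div_mul_eq_mul_div, div_eq_iff hne]
        linear_combination hiter.symm
      have hlim : Tendsto (fun n : ℕ =>
          (pochC (c-a) n * pochC (c-b) n / (pochC c n * pochC (c-a-b) n))
            * ∑' m, gaussTerm a b (c + n) m) atTop
          (𝓝 (Complex.Gamma c * Complex.Gamma (c-a-b) /
            (Complex.Gamma (c-a) * Complex.Gamma (c-b)) * 1)) :=
        (tendsto_Q a b c hc' h hA hB).mul (tendsto_gauss_tail a b c hc')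
      rw [mul_one] at hlim
      have hconst' : Tendsto (fun n : ℕ =>
          (pochC (c-a) n * pochC (c-b) n / (pochC c n * pochC (c-a-b) n))
            * ∑' m, gaussTerm a b (c + n) m) atTop (𝓝 (∑' m, gaussTerm a b c m)) := by
        rw [show (fun n : ℕ =>
          (pochC (c-a) n * pochC (c-b) n / (pochC c n * pochC (c-a-b) n))
            * ∑' m, gaussTerm a b (c + n) m) = fun _ => ∑' m, gaussTerm a b c m
          from funext hconst]
        exact tendsto_const_nhds
      exact tendsto_nhds_unique hconst' hlim
    · -- c - b is a nonpositive integer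
      push_neg at hB
      obtain ⟨k, hk⟩ := hB
      have hGb : Complex.Gamma (c - b) = 0 := by
        rw [show c - b = -(k:ℂ) by linear_combination hk]
        exact Complex.Gamma_neg_nat_eq_zero k
      rw [hGb, mul_zero, div_zero]
      have hp0 : pochC (c-b) (k+1) = 0 := by
        rw [pochC_eq_prod]
        exact Finset.prod_eq_zero (Finset.self_mem_range_succ k) hk
      have hiter := gauss_iter a b c hc' h (k+1)
      rw [hp0, mul_zero, zero_mul] at hiter
      have hne : pochC c (k+1) * pochC (c-a-b) (k+1) ≠ 0 :=
        mul_ne_zero (pochC_ne_zero hc' (k+1)) (pochC_ne_zero hσ (k+1))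
      exact (mul_eq_zero.mp hiter).resolve_left hne
  · -- c - a is a nonpositive integer
    push_neg at hA
    obtain ⟨k, hk⟩ := hA
    have hGa : Complex.Gamma (c - a) = 0 := by
      rw [show c - a = -(k:ℂ) by linear_combination hk]
      exact Complex.Gamma_neg_nat_eq_zero k
    rw [hGa, zero_mul, div_zero]
    have hp0 : pochC (c-a) (k+1) = 0 := by
      rw [pochC_eq_prod]
      exact Finset.prod_eq_zero (Finset.self_mem_range_succ k) hk
    have hiter := gauss_iter a b c hc' h (k+1)
    rw [hp0, zero_mul, zero_mul] at hiter
    have hne : pochC c (k+1) * pochC (c-a-b) (k+1) ≠ 0 :=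
      mul_ne_zero (pochC_ne_zero hc' (k+1)) (pochC_ne_zero hσ (k+1))
    exact (mul_eq_zero.mp hiter).resolve_left hne
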